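/- Let n, m be positive integers, let 𝐀 be a real n×n matrix, 𝐁 a real n×m matrix, 𝐗 a symmetric positive definite n×n matrix, and 𝐖 a symmetric positive definite m×m matrix. Then 𝐗 − 𝐀𝐗𝐀ᵀ − 𝐁𝐖𝐁ᵀ is positive definite if and only if the symmetric 3×3 block matrix [[𝐗, 𝐀𝐗, 𝐁], [𝐗𝐀ᵀ, 𝐗, 0], [𝐁ᵀ, 0, 𝐖⁻¹]] is positive definite. -/

import Mathlib

open Matrix

noncomputable def invertibleOfPosDef {k : ℕ} {M : Matrix (Fin k) (Fin k) ℝ}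
    (hM : M.PosDef) : Invertible M :=
  M.invertibleOfIsUnitDet (isUnit_iff_ne_zero.2 (ne_of_gt hM.det_pos))

/-- PosDef analogue of `Matrix.PosSemidef.fromBlocks₂₂`. -/
theorem posDef_fromBlocks₂₂ {p q : Type*} [Fintype p] [DecidableEq p] [Fintype q] [DecidableEq q]
    (A : Matrix p p ℝ) (B : Matrix p q ℝ) {D : Matrix q q ℝ} (hD : D.PosDef) [Invertible D] :
    (fromBlocks A B Bᴴ D).PosDef ↔ (A - B * D⁻¹ * Bᴴ).PosDef := by
  rw [posDef_iff_dotProduct_mulVec, posDef_iff_dotProduct_mulVec, Matrix.IsHermitian.fromBlocks₂₂ _ _ hD.1]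
  refine and_congr_right fun _ => ⟨fun h x hx => ?_, fun h x hx => ?_⟩
  · have hv : (x ⊕ᵥ (-((D⁻¹ * Bᴴ) *ᵥ x))) ≠ 0 := by
      intro h0
      apply hx
      funext i
      have := congrFun h0 (Sum.inl i)
      simpa using this
    have := h hv
    rw [dotProduct_mulVec, schur_complement_eq₂₂ A B _ _ hD.1] at this
    rw [dotProduct_mulVec]
    simpa using this
  · rw [dotProduct_mulVec, ← Sum.elim_comp_inl_inr x,
      schur_complement_eq₂₂ A B _ _ hD.1]
    by_cases hxl : x ∘ Sum.inl = 0
    · have hxr : x ∘ Sum.inr ≠ 0 := by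
        intro h0
        apply hx
        rw [← Sum.elim_comp_inl_inr x, hxl, h0]
        simp
      have h1 : 0 < star ((D⁻¹ * Bᴴ) *ᵥ (x ∘ Sum.inl) + x ∘ Sum.inr) ᵥ* D ⬝ᵥ
          ((D⁻¹ * Bᴴ) *ᵥ (x ∘ Sum.inl) + x ∘ Sum.inr) := by
        rw [← dotProduct_mulVec]
        apply hD.dotProduct_mulVec_pos
        simp [hxl, hxr]
      have h2 : star (x ∘ Sum.inl) ᵥ* (A - B * D⁻¹ * Bᴴ) ⬝ᵥ (x ∘ Sum.inl) = 0 := by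
        rw [hxl]; simp
      rw [h2]; simpa using h1
    · have h1 : 0 ≤ star ((D⁻¹ * Bᴴ) *ᵥ (x ∘ Sum.inl) + x ∘ Sum.inr) ᵥ* D ⬝ᵥ
          ((D⁻¹ * Bᴴ) *ᵥ (x ∘ Sum.inl) + x ∘ Sum.inr) := by
        rw [← dotProduct_mulVec]
        exact (posSemidef_iff_dotProduct_mulVec.mp hD.posSemidef).2 _
      have h2 : 0 < star (x ∘ Sum.inl) ᵥ* (A - B * D⁻¹ * Bᴴ) ⬝ᵥ (x ∘ Sum.inl) := by
        rw [← dotProduct_mulVec]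
        exact h hxl
      linarith

/-- Schur-complement reformulation of the closed-loop covariance condition
`A X Aᵀ + B W Bᵀ ≺ X` (Eq. (18) in the paper). -/
theorem schur_closed_loop_covariance
    (n m : ℕ) (hn : 0 < n) (hm : 0 < m)
    (A X : Matrix (Fin n) (Fin n) ℝ) (B : Matrix (Fin n) (Fin m) ℝ)
    (W : Matrix (Fin m) (Fin m) ℝ)
    (hX : X.PosDef) (hW : W.PosDef) :
    (X - A * X * Aᵀ - B * W * Bᵀ).PosDef ↔
      (fromBlocks X (fromCols (A * X) B)
        (fromRows (X * Aᵀ) Bᵀ) (fromBlocks X 0 0 W⁻¹)).PosDef := by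
  have hXi : Invertible X := invertibleOfPosDef hX
  have hWi : Invertible W := invertibleOfPosDef hW
  have hWinv : (W⁻¹).PosDef := hW.inv
  have hWii : Invertible (W⁻¹) := invertibleOfPosDef hWinv
  -- The (2,2) block is positive definite
  have hD : (fromBlocks X 0 0 W⁻¹ : Matrix (Fin n ⊕ Fin m) (Fin n ⊕ Fin m) ℝ).PosDef := by
    have := (posDef_fromBlocks₂₂ X (0 : Matrix (Fin n) (Fin m) ℝ) hWinv)
    simp only [conjTranspose_zero, Matrix.zero_mul, Matrix.mul_zero, sub_zero] at this
    exact this.mpr hX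
  have hDi : Invertible (fromBlocks X 0 0 W⁻¹ : Matrix (Fin n ⊕ Fin m) (Fin n ⊕ Fin m) ℝ) := by
    exact (fromBlocks X 0 0 W⁻¹).invertibleOfIsUnitDet
      (isUnit_iff_ne_zero.2 (ne_of_gt hD.det_pos))
  -- inverse of the block-diagonal matrix
  have hDinv : (fromBlocks X 0 0 W⁻¹ : Matrix (Fin n ⊕ Fin m) (Fin n ⊕ Fin m) ℝ)⁻¹
      = fromBlocks X⁻¹ 0 0 W := by
    apply Matrix.inv_eq_right_inv
    rw [fromBlocks_multiply]
    simp [Matrix.mul_nonsing_inv X (isUnit_iff_ne_zero.2 (ne_of_gt hX.det_pos)),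
      Matrix.nonsing_inv_mul W (isUnit_iff_ne_zero.2 (ne_of_gt hW.det_pos)),
      ← fromBlocks_one]
  have hXt : Xᵀ = X := by
    rw [← conjTranspose_eq_transpose_of_trivial]; exact hX.1
  -- identify the lower-left block as the conjugate transpose of the upper-right one
  have hC : fromRows (X * Aᵀ) Bᵀ = (fromCols (A * X) B)ᴴ := by
    rw [conjTranspose_eq_transpose_of_trivial, transpose_fromCols, transpose_mul, hXt]
  rw [hC, posDef_fromBlocks₂₂ _ _ hD, hDinv]
  have hcalc : fromCols (A * X) B * fromBlocks X⁻¹ 0 0 W * (fromCols (A * X) B)ᴴ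
      = A * X * Aᵀ + B * W * Bᵀ := by
    rw [conjTranspose_eq_transpose_of_trivial, transpose_fromCols, transpose_mul, hXt,
      fromCols_mul_fromBlocks, fromCols_mul_fromRows]
    simp only [Matrix.mul_zero, Matrix.zero_mul, add_zero, zero_add]
    congr 1
    rw [Matrix.mul_assoc (A * X), ← Matrix.mul_assoc X⁻¹,
      Matrix.nonsing_inv_mul X (isUnit_iff_ne_zero.2 (ne_of_gt hX.det_pos)),
      Matrix.one_mul]
  rw [hcalc, sub_add_eq_sub_sub]
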